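/- The map κ : z ↦ k⁻¹·conj(z)·k (conjugation composed with conjugation by the quaternion unit k) is an involutorial anti-automorphism of the Spin algebra (ℍ, +, ∘): κ is additive, κ∘κ = id, and κ(c ∘ z) = κ(z) ∘ κ(c) for all quaternions c, z. -/

import Mathlib

open Quaternion

/-- The Spin multiplication `c ∘ z = c·z + 2r(c₂z₃ − c₃z₂)` on the quaternions. -/
noncomputable def spinMul (r : ℝ) (c z : ℍ[ℝ]) : ℍ[ℝ] :=
  c * z + ((2 * r * (c.imJ * z.imK - c.imK * z.imJ) : ℝ) : ℍ[ℝ])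

/-- The quaternion unit `k`. -/
def qk : ℍ[ℝ] := ⟨0, 0, 0, 1⟩

/-- The map `κ : z ↦ k⁻¹ · conj z · k`. -/
noncomputable def spinKappa (z : ℍ[ℝ]) : ℍ[ℝ] := qk⁻¹ * star z * qk

def qmk (a b c d : ℝ) : ℍ[ℝ] := ⟨a, b, c, d⟩

@[simp] lemma qmk_re (a b c d : ℝ) : (qmk a b c d).re = a := rfl
@[simp] lemma qmk_imI (a b c d : ℝ) : (qmk a b c d).imI = b := rfl
@[simp] lemma qmk_imJ (a b c d : ℝ) : (qmk a b c d).imJ = c := rfl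
@[simp] lemma qmk_imK (a b c d : ℝ) : (qmk a b c d).imK = d := rfl

lemma qk_eq : qk = qmk 0 0 0 1 := rfl

lemma qk_inv : qk⁻¹ = qmk 0 0 0 (-1) := by
  refine inv_eq_of_mul_eq_one_right ?_
  ext <;> simp [qk_eq, Quaternion.re_mul, Quaternion.imI_mul, Quaternion.imJ_mul, Quaternion.imK_mul]

lemma kappa_eq (z : ℍ[ℝ]) : spinKappa z = qmk z.re z.imI z.imJ (-z.imK) := by
  rw [spinKappa, qk_inv]
  ext <;> simp [qk_eq, Quaternion.re_mul, Quaternion.imI_mul, Quaternion.imJ_mul, Quaternion.imK_mul]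

/-- `κ : z ↦ conj(z)^k` is an involutorial anti-automorphism of the Spin algebra. -/
theorem stmt7 (r : ℝ) :
    (∀ z w : ℍ[ℝ], spinKappa (z + w) = spinKappa z + spinKappa w) ∧
    (∀ z : ℍ[ℝ], spinKappa (spinKappa z) = z) ∧
    (∀ c z : ℍ[ℝ], spinKappa (spinMul r c z) = spinMul r (spinKappa z) (spinKappa c)) := by
  refine ⟨fun z w => ?_, fun z => ?_, fun c z => ?_⟩ <;>
    simp only [kappa_eq, spinMul] <;>
    ext <;>
    simp [Quaternion.re_mul, Quaternion.imI_mul, Quaternion.imJ_mul, Quaternion.imK_mul] <;>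
    ring
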